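/- arXiv:2012.00123 — 2 statements merged into one kernel-verified Lean document; each statement's English description precedes it below -/
import Mathlib

section
/- Let d₁, d₂ ≥ 1, ρ ∈ (0,1), λ ≥ 0, and define the Schur complement H = (1−ρ)I_{d₁} + (ρ − d₂ρ²/(d₂ρ−ρ+λ+1))·1_{d₁}1_{d₁}ᵀ. Then H is symmetric positive definite and its condition number equals 1 + ((1−ρ+λ)/(d₂ρ−ρ+λ+1))·(d₁ρ/(1−ρ)). -/
open Matrix BigOperators

def onesMat (d : ℕ) : Matrix (Fin d) (Fin d) ℝ := Matrix.of fun _ _ => 1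

theorem stmt_7 (d₁ d₂ : ℕ) (hd₁ : 1 ≤ d₁) (hd₂ : 1 ≤ d₂) (ρ lam : ℝ)
    (hρ : ρ ∈ Set.Ioo (0 : ℝ) 1) (hlam : 0 ≤ lam) :
    let c : ℝ := ρ - d₂ * ρ ^ 2 / (d₂ * ρ - ρ + lam + 1)
    let H : Matrix (Fin d₁) (Fin d₁) ℝ :=
      (1 - ρ) • (1 : Matrix (Fin d₁) (Fin d₁) ℝ) + c • onesMat d₁
    H.IsSymm ∧ H.PosDef ∧
      -- largest eigenvalue 1 - ρ + d₁ c, with eigenvector 1_{d₁}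
      H.mulVec (fun _ => 1) = (1 - ρ + d₁ * c) • (fun _ => (1 : ℝ)) ∧
      -- smallest eigenvalue 1 - ρ on mean-zero vectors
      (∀ v : Fin d₁ → ℝ, ∑ i, v i = 0 → H.mulVec v = (1 - ρ) • v) ∧
      -- the resulting condition number
      (1 - ρ + d₁ * c) / (1 - ρ) =
        1 + (1 - ρ + lam) / (d₂ * ρ - ρ + lam + 1) * (d₁ * ρ / (1 - ρ)) := by
  intro c H
  obtain ⟨hρ0, hρ1⟩ := hρ
  have hD : (0:ℝ) < d₂ * ρ - ρ + lam + 1 := by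
    have : (1:ℝ) ≤ (d₂:ℝ) := by exact_mod_cast hd₂
    nlinarith
  have hc : 0 < c := by
    have hcc : c = ρ * (1 - ρ + lam) / (d₂ * ρ - ρ + lam + 1) := by
      rw [eq_div_iff hD.ne']; simp only [c]; rw [sub_mul, div_mul_cancel₀ _ hD.ne']; ring
    rw [hcc]
    apply div_pos (by nlinarith) hD
  have happ : ∀ i j, H i j = (1 - ρ) * (if i = j then 1 else 0) + c := by
    intro i j
    simp [H, onesMat, Matrix.one_apply, Matrix.add_apply, Matrix.smul_apply]
  have hmul : ∀ (v : Fin d₁ → ℝ) (i : Fin d₁),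
      H.mulVec v i = (1 - ρ) * v i + c * ∑ j, v j := by
    intro v i
    simp only [Matrix.mulVec, dotProduct, happ]
    have hterm : ∀ j, ((1 - ρ) * (if i = j then 1 else 0) + c) * v j
        = (1 - ρ) * (if i = j then v j else 0) + c * v j := by
      intro j; split_ifs <;> ring
    simp only [hterm]
    rw [Finset.sum_add_distrib, ← Finset.mul_sum, ← Finset.mul_sum, Finset.sum_ite_eq]
    simp
  refine ⟨?_, ?_, ?_, ?_, ?_⟩
  · ext i j
    simp only [Matrix.transpose_apply, happ]
    by_cases h : i = j <;> simp [h, eq_comm]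
  · rw [Matrix.posDef_iff_dotProduct_mulVec]
    constructor
    · ext i j
      simp only [Matrix.conjTranspose_apply, happ, star, id]
      by_cases h : i = j <;> simp [h, eq_comm]
    · intro x hx
      have hq : star x ⬝ᵥ H.mulVec x
          = (1 - ρ) * ∑ i, x i ^ 2 + c * (∑ i, x i) ^ 2 := by
        simp only [dotProduct, hmul, star, Pi.star_apply, star_trivial, id_eq]
      
        have hterm : ∀ i, x i * ((1 - ρ) * x i + c * ∑ j, x j)
            = (1 - ρ) * x i ^ 2 + (c * ∑ j, x j) * x i := by
          intro i; ring
        simp only [hterm]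
        rw [Finset.sum_add_distrib, ← Finset.mul_sum, ← Finset.mul_sum]
        ring
      rw [hq]
      have h1 : 0 < ∑ i, x i ^ 2 := by
        have hne : ∃ i, x i ≠ 0 := by
          by_contra h
          push_neg at h
          exact hx (funext h)
        obtain ⟨i, hi⟩ := hne
        refine lt_of_lt_of_le ?_ (Finset.single_le_sum (f := fun j => x j ^ 2)
          (fun j _ => sq_nonneg _) (Finset.mem_univ i))
        positivity
      have h2 := sq_nonneg (∑ i, x i)
      nlinarith
  · funext i
    rw [hmul]
    simp [Finset.sum_const, Finset.card_univ]
    ring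
  · intro v hv
    funext i
    rw [hmul, hv]
    simp
  · have h1ρ : (1:ℝ) - ρ ≠ 0 := by linarith
    have hD' : d₂ * ρ - ρ + lam + 1 ≠ 0 := ne_of_gt hD
    simp only [c]
    linear_combination mul_inv_cancel₀ h1ρ - d₁ * ρ * (1 - ρ)⁻¹ * mul_inv_cancel₀ hD'
end

section
/- Let S ∈ ℝ^{n×m} be a matrix with positive entries whose row sums form the vector μ and whose column sums form ν (both strictly positive). Let S̄ = S_{:,1:m−1} be S with its last column removed and ν̄ the first m−1 entries of ν. Then the matrix K = diag(ν̄) − S̄ᵀ diag(μ)^{-1} S̄ is symmetric positive definite. -/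
open Matrix BigOperators

theorem stmt_13 (n m : ℕ) (S : Matrix (Fin n) (Fin (m + 1)) ℝ)
    (hS : ∀ i j, 0 < S i j)
    (μ : Fin n → ℝ) (ν : Fin (m + 1) → ℝ)
    (hμ : ∀ i, ∑ j, S i j = μ i) (hν : ∀ j, ∑ i, S i j = ν j)
    (hμpos : ∀ i, 0 < μ i) (hνpos : ∀ j, 0 < ν j) :
    -- S̄ is S with its last column removed, ν̄ the first m entries of ν
    let Sbar : Matrix (Fin n) (Fin m) ℝ := Matrix.of fun i j => S i j.castSucc
    let νbar : Fin m → ℝ := fun j => ν j.castSucc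
    let K : Matrix (Fin m) (Fin m) ℝ :=
      Matrix.diagonal νbar - Sbarᵀ * (Matrix.diagonal μ)⁻¹ * Sbar
    K.PosDef := by
  intro Sbar νbar K
  have hDinv : (Matrix.diagonal μ)⁻¹ = Matrix.diagonal fun i => (μ i)⁻¹ := by
    apply Matrix.inv_eq_right_inv
    rw [Matrix.diagonal_mul_diagonal]
    rw [show (fun i => μ i * (μ i)⁻¹) = fun _ => (1:ℝ) from funext fun i => mul_inv_cancel₀ (hμpos i).ne']
    exact Matrix.diagonal_one
  refine Matrix.PosDef.of_dotProduct_mulVec_pos ?_ ?_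
  · -- Hermitian
    have h1 : (Matrix.diagonal νbar).IsHermitian := Matrix.isHermitian_diagonal _
    have h2 : (Sbarᵀ * (Matrix.diagonal μ)⁻¹ * Sbar).IsHermitian := by
      rw [hDinv]
      have := Matrix.isHermitian_conjTranspose_mul_mul Sbar
        (Matrix.isHermitian_diagonal (fun i => (μ i)⁻¹))
      simpa using this
    exact h1.sub h2
  · intro x hx
    -- quadratic form
    have key : dotProduct (star x) (K *ᵥ x) =
        ∑ j, νbar j * x j ^ 2 - ∑ i, (μ i)⁻¹ * (∑ j, Sbar i j * x j) ^ 2 := by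
      have hxs : star x = x := star_trivial x
      have h1 : dotProduct x (Matrix.diagonal νbar *ᵥ x) = ∑ j, νbar j * x j ^ 2 := by
        simp [dotProduct, Matrix.mulVec_diagonal]
        apply Finset.sum_congr rfl; intro j _; ring
      have h2 : dotProduct x ((Sbarᵀ * Matrix.diagonal (fun i => (μ i)⁻¹) * Sbar) *ᵥ x)
          = ∑ i, (μ i)⁻¹ * (∑ j, Sbar i j * x j) ^ 2 := by
        rw [← Matrix.mulVec_mulVec, ← Matrix.mulVec_mulVec, dotProduct_mulVec,
          Matrix.vecMul_transpose]
        simp [dotProduct, Matrix.mulVec_diagonal, Matrix.mulVec, dotProduct,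
          Matrix.diagonal_apply, ite_mul, zero_mul, Finset.sum_ite_eq, Finset.mem_univ, if_true]
        apply Finset.sum_congr rfl; intro i _; ring
      show dotProduct (star x)
        ((Matrix.diagonal νbar - Sbarᵀ * (Matrix.diagonal μ)⁻¹ * Sbar) *ᵥ x) = _
      rw [hxs, hDinv, Matrix.sub_mulVec, dotProduct_sub, h1, h2]
    rw [key]
    rw [sub_pos]
    obtain ⟨j0, hj0⟩ := Function.ne_iff.mp hx
    -- positivity of Σ_j Sbar i j x_j^2
    have hpos : ∀ i, 0 < ∑ j, Sbar i j * x j ^ 2 := by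
      intro i
      apply Finset.sum_pos' (fun j _ => mul_nonneg (hS i j.castSucc).le (sq_nonneg _))
      refine ⟨j0, Finset.mem_univ _, mul_pos (hS i j0.castSucc) ?_⟩
      have hj0' : x j0 ≠ 0 := by simpa using hj0
      positivity
    -- per-row strict inequality
    have hrow : ∀ i, (μ i)⁻¹ * (∑ j, Sbar i j * x j) ^ 2 < ∑ j, Sbar i j * x j ^ 2 := by
      intro i
      have hcs : (∑ j, Sbar i j * x j) ^ 2 ≤ (∑ j, Sbar i j) * ∑ j, Sbar i j * x j ^ 2 := by
        apply Finset.sum_sq_le_sum_mul_sum_of_sq_eq_mul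
        · exact fun j _ => (hS i j.castSucc).le
        · exact fun j _ => mul_nonneg (hS i j.castSucc).le (sq_nonneg _)
        · intro j _; ring
      have hlt : ∑ j, Sbar i j < μ i := by
        rw [← hμ i, Fin.sum_univ_castSucc]
        exact lt_add_of_pos_right _ (hS i (Fin.last m))
      calc (μ i)⁻¹ * (∑ j, Sbar i j * x j) ^ 2
          ≤ (μ i)⁻¹ * ((∑ j, Sbar i j) * ∑ j, Sbar i j * x j ^ 2) := by
            apply mul_le_mul_of_nonneg_left hcs (inv_nonneg.mpr (hμpos i).le)
        _ < 1 * ∑ j, Sbar i j * x j ^ 2 := by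
            rw [← mul_assoc]
            refine mul_lt_mul_of_pos_right ?_ (hpos i)
            rw [inv_mul_lt_iff₀ (hμpos i), mul_one]
            exact hlt
        _ = _ := one_mul _
    -- n > 0
    have hn : Nonempty (Fin n) := by
      by_contra h
      have hie : IsEmpty (Fin n) := not_nonempty_iff.mp h
      have := hνpos 0
      rw [← hν 0, Finset.univ_eq_empty, Finset.sum_empty] at this
      exact lt_irrefl 0 this
    calc ∑ i, (μ i)⁻¹ * (∑ j, Sbar i j * x j) ^ 2
        < ∑ i, ∑ j, Sbar i j * x j ^ 2 := by
          apply Finset.sum_lt_sum_of_nonempty _ (fun i _ => hrow i)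
          exact Finset.univ_nonempty_iff.mpr hn
      _ = ∑ j, νbar j * x j ^ 2 := by
          rw [Finset.sum_comm]
          apply Finset.sum_congr rfl
          intro j _
          rw [← Finset.sum_mul]
          congr 1
          exact hν j.castSucc
end
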